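/- Let n be a positive integer, P a symmetric idempotent real n×n matrix, Q = I − P, M a symmetric positive definite real n×n matrix, and μ > 0 a real scalar. Then the constraint inertia matrix M̄ = P M P + μ Q is symmetric positive definite (even when the underlying constraint matrix is rank deficient, i.e., for every orthogonal projection P). -/

import Mathlib

open Matrix

/-- The constraint inertia matrix `M̄ = P M P + μ Q` with `Q = I - P` is symmetric
positive definite for every orthogonal projection `P`, symmetric positive definite `M`,
and `μ > 0`. -/
theorem stmt_0 (n : ℕ) (hn : 0 < n)
    (P M : Matrix (Fin n) (Fin n) ℝ)
    (hPsymm : Pᵀ = P) (hPidem : P * P = P)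
    (hM : M.PosDef) (μ : ℝ) (hμ : 0 < μ) :
    (P * M * P + μ • ((1 : Matrix (Fin n) (Fin n) ℝ) - P)).PosDef := by
  set Q : Matrix (Fin n) (Fin n) ℝ := (1 : Matrix (Fin n) (Fin n) ℝ) - P with hQ
  have hMsymm : Mᵀ = M := by simpa using hM.1.eq
  have hQsymm : Qᵀ = Q := by simp [hQ, transpose_sub, hPsymm]
  have hQidem : Q * Q = Q := by
    simp [hQ, sub_mul, mul_sub, hPidem]
  rw [posDef_iff_dotProduct_mulVec]
  constructor
  · show (P * M * P + μ • Q)ᴴ = _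
    have h1 : (P * M * P)ᴴ = P * M * P := by
      simp only [conjTranspose_eq_transpose_of_trivial, transpose_mul, hPsymm, hMsymm,
        Matrix.mul_assoc]
    rw [conjTranspose_add, h1, conjTranspose_smul]
    simp [conjTranspose_eq_transpose_of_trivial, hQsymm]
  · intro x hx
    have hdot : ∀ v : Fin n → ℝ, 0 ≤ v ⬝ᵥ v := by
      intro v
      simpa using dotProduct_self_star_nonneg v
    have h1 : x ⬝ᵥ ((P * M * P) *ᵥ x) = (P *ᵥ x) ⬝ᵥ (M *ᵥ (P *ᵥ x)) := by
      rw [← mulVec_mulVec, ← mulVec_mulVec, dotProduct_mulVec, ← mulVec_transpose, hPsymm]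
    have h2 : x ⬝ᵥ (Q *ᵥ x) = (Q *ᵥ x) ⬝ᵥ (Q *ᵥ x) := by
      conv_lhs => rw [← hQidem, ← mulVec_mulVec, dotProduct_mulVec, ← mulVec_transpose, hQsymm]
    have h1' : 0 ≤ (P *ᵥ x) ⬝ᵥ (M *ᵥ (P *ᵥ x)) := by
      rcases eq_or_ne (P *ᵥ x) 0 with h | h
      · simp [h]
      · exact le_of_lt (by simpa using hM.dotProduct_mulVec_pos h)
    have h2' : 0 ≤ (Q *ᵥ x) ⬝ᵥ (Q *ᵥ x) := hdot _
    have hsum : x ⬝ᵥ ((P * M * P + μ • Q) *ᵥ x)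
        = (P *ᵥ x) ⬝ᵥ (M *ᵥ (P *ᵥ x)) + μ * ((Q *ᵥ x) ⬝ᵥ (Q *ᵥ x)) := by
      rw [add_mulVec, dotProduct_add, h1, smul_mulVec, dotProduct_smul, h2]
      rfl
    have hstar : star x = x := rfl
    rw [hstar, hsum]
    rcases eq_or_ne (P *ᵥ x) 0 with h | h
    · have hQx : Q *ᵥ x = x := by
        simp [hQ, sub_mulVec, h]
      have : 0 < x ⬝ᵥ x := by
        rcases (hdot x).lt_or_eq with h' | h'
        · exact h'
        · exact absurd (dotProduct_self_eq_zero.mp h'.symm) hx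
      have := mul_pos hμ (hQx ▸ this)
      nlinarith [h1']
    · have := hM.dotProduct_mulVec_pos h
      have h1pos : 0 < (P *ᵥ x) ⬝ᵥ (M *ᵥ (P *ᵥ x)) := by simpa using this
      nlinarith [mul_nonneg hμ.le h2']
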